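/- Non-completeness without fresh atoms: for the equational theory T = {a#X ⊢ X = f(X)} and rewrite theory R = {a#X ⊢ X → f(X)}, we have ⊢_T X = f(X) (in the empty freshness context) but it is not the case that ⊢_R X ↔* f(X). -/

import Mathlib

/-! Nominal terms: atoms, permutations, terms, actions, freshness, α-equivalence,
nominal rewriting and nominal algebra, closed rewriting. -/

abbrev Atom := ℕ
abbrev Unknown := ℕ

/-- Finitely supported permutations of atoms. -/
def FinPerm := {π : Equiv.Perm Atom // {a | π a ≠ a}.Finite}

namespace FinPerm

instance : CoeFun FinPerm (fun _ => Atom → Atom) := ⟨fun π => π.1⟩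

def id : FinPerm := ⟨Equiv.refl Atom, by simp⟩

/-- `comp π π'` is `π ∘ π'` (first apply `π'`, then `π`). -/
def comp (π π' : FinPerm) : FinPerm :=
  ⟨π'.1.trans π.1, ((π.2.union π'.2).subset (by
    intro a ha
    simp only [Set.mem_setOf_eq, Equiv.trans_apply] at ha
    by_cases h : π'.1 a = a
    · exact Or.inl (by simpa [h] using ha)
    · exact Or.inr h))⟩

def inv (π : FinPerm) : FinPerm :=
  ⟨π.1.symm, π.2.subset (by
    intro a ha h
    exact ha (π.1.symm_apply_eq.mpr h.symm))⟩

def swap (a b : Atom) : FinPerm :=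
  ⟨Equiv.swap a b, (Set.toFinite {a, b}).subset (by
    intro c hc
    by_contra h
    simp only [Set.mem_insert_iff, Set.mem_singleton_iff, not_or] at h
    exact hc (Equiv.swap_apply_of_ne_of_ne h.1 h.2))⟩

/-- The (finite) set of atoms moved by `π`. -/
noncomputable def nontriv (π : FinPerm) : Finset Atom := π.2.toFinset

end FinPerm

/-- Nominal terms: atoms, moderated unknowns `π·X`, abstractions `[a]t`,
and term-formers applied to lists of arguments. -/
inductive Term : Type where
  | atom : Atom → Term
  | var  : FinPerm → Unknown → Term
  | abs  : Atom → Term → Term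
  | app  : ℕ → List Term → Term

/-- Permutation action on terms. -/
def permAct (π : FinPerm) : Term → Term
  | .atom a => .atom (π a)
  | .var π' X => .var (π.comp π') X
  | .abs a t => .abs (π a) (permAct π t)
  | .app f ts => .app f (ts.attach.map fun t => permAct π t.1)
decreasing_by
  all_goals simp_wf
  have := List.sizeOf_lt_of_mem t.2
  omega

/-- Substitutions, represented as total maps (the default value of `X` is `id·X`). -/
def Subst := Unknown → Term

/-- A substitution has finite domain. -/
def Subst.FinDom (σ : Subst) : Prop := {X | σ X ≠ .var FinPerm.id X}.Finite

/-- Substitution action on terms. -/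
def subst (σ : Subst) : Term → Term
  | .atom a => .atom a
  | .var π X => permAct π (σ X)
  | .abs a t => .abs a (subst σ t)
  | .app f ts => .app f (ts.attach.map fun t => subst σ t.1)
decreasing_by
  all_goals simp_wf
  have := List.sizeOf_lt_of_mem t.2
  omega

/-- Composition of substitutions: `(σ.comp θ) X = (Xσ)θ`. -/
def Subst.comp (σ θ : Subst) : Subst := fun X => subst θ (σ X)

/-- `σ∘π`, mapping `X` to `π·(σ X)`. -/
def Subst.permComp (σ : Subst) (π : FinPerm) : Subst := fun X => permAct π (σ X)

mutual
/-- Atoms occurring in a term. -/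
noncomputable def atmsF : Term → Finset Atom
  | .atom a => {a}
  | .var π _ => π.nontriv
  | .abs a t => insert a (atmsF t)
  | .app _ ts => atmsLF ts
noncomputable def atmsLF : List Term → Finset Atom
  | [] => ∅
  | t :: ts => atmsF t ∪ atmsLF ts
end

mutual
/-- Unknowns occurring in a term. -/
def unknF : Term → Finset Unknown
  | .atom _ => ∅
  | .var _ X => {X}
  | .abs _ t => unknF t
  | .app _ ts => unknLF ts
def unknLF : List Term → Finset Unknown
  | [] => ∅
  | t :: ts => unknF t ∪ unknLF ts
end

/-- Freshness contexts: finite sets of primitive constraints `a#X`. -/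
abbrev Ctx := Finset (Atom × Unknown)

def ctxAtoms (Δ : Ctx) : Finset Atom := Δ.image Prod.fst
def ctxUnkns (Δ : Ctx) : Finset Unknown := Δ.image Prod.snd

/-- Derivable freshness judgements `Δ ⊢ a # t`. -/
inductive Fresh (Δ : Ctx) : Atom → Term → Prop where
  | atom {a b} : a ≠ b → Fresh Δ a (.atom b)
  | var {a π X} : (π.inv a, X) ∈ Δ → Fresh Δ a (.var π X)
  | absSame {a t} : Fresh Δ a (.abs a t)
  | absDiff {a b t} : a ≠ b → Fresh Δ a t → Fresh Δ a (.abs b t)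
  | app {a f ts} : (∀ t ∈ ts, Fresh Δ a t) → Fresh Δ a (.app f ts)

/-- Derivable α-equivalence judgements `Δ ⊢ s ≈α t`. -/
inductive Aeq (Δ : Ctx) : Term → Term → Prop where
  | atom {a} : Aeq Δ (.atom a) (.atom a)
  | var {π π' : FinPerm} {X : Unknown} : (∀ a : Atom, (π : Atom → Atom) a ≠ (π' : Atom → Atom) a → (a, X) ∈ Δ) →
      Aeq Δ (.var π X) (.var π' X)
  | absSame {a t u} : Aeq Δ t u → Aeq Δ (.abs a t) (.abs a u)
  | absDiff {a b t u} : a ≠ b → Fresh Δ b t → Aeq Δ (permAct (FinPerm.swap b a) t) u →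
      Aeq Δ (.abs a t) (.abs b u)
  | app {f ts us} : ts.length = us.length → (∀ p ∈ ts.zip us, Aeq Δ p.1 p.2) →
      Aeq Δ (.app f ts) (.app f us)

/-- Subterm relation. -/
inductive Subterm : Term → Term → Prop where
  | refl (t) : Subterm t t
  | abs {s t a} : Subterm s t → Subterm s (.abs a t)
  | app {s t f ts} : t ∈ ts → Subterm s t → Subterm s (.app f ts)

mutual
/-- Number of occurrences of the unknown `X` in a term. -/
def countUnk (X : Unknown) : Term → ℕ
  | .atom _ => 0
  | .var _ Y => if Y = X then 1 else 0
  | .abs _ t => countUnk X t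
  | .app _ ts => countUnkL X ts
def countUnkL (X : Unknown) : List Term → ℕ
  | [] => 0
  | t :: ts => countUnk X t + countUnkL X ts
end

/-- A position: a term with a distinguished unknown occurring exactly once, as `id·X`. -/
structure Position where
  ctx : Term
  hole : Unknown
  once : countUnk hole ctx = 1
  idOnly : ∀ π : FinPerm, Subterm (.var π hole) ctx → π = FinPerm.id

def fillAux (X : Unknown) (u : Term) : Term → Term
  | .atom a => .atom a
  | .var π Y => if Y = X then u else .var π Y
  | .abs a t => .abs a (fillAux X u t)
  | .app f ts => .app f (ts.attach.map fun t => fillAux X u t.1)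
decreasing_by
  all_goals simp_wf
  have := List.sizeOf_lt_of_mem t.2
  omega

/-- `C[u]`: place `u` in the hole of the position `C`. -/
def Position.fill (C : Position) (u : Term) : Term := fillAux C.hole u C.ctx

/-- A rule `∇ ⊢ l → r` (also used for axioms `∇ ⊢ l = r`). -/
structure Rule where
  ctx : Ctx
  lhs : Term
  rhs : Term

noncomputable def Rule.atms (R : Rule) : Finset Atom := ctxAtoms R.ctx ∪ atmsF R.lhs ∪ atmsF R.rhs
def Rule.unkn (R : Rule) : Finset Unknown := ctxUnkns R.ctx ∪ unknF R.lhs ∪ unknF R.rhs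

/-- `Δ ⊢ ∇θ`: every constraint of `∇`, instantiated by `θ`, is derivable from `Δ`. -/
def FreshSubst (Δ N : Ctx) (θ : Subst) : Prop :=
  ∀ p ∈ N, Fresh Δ p.1 (subst θ (.var FinPerm.id p.2))

/-- One-step nominal rewriting with the rule `R` in context `Δ`. -/
def OneStepR (R : Rule) (Δ : Ctx) (s t : Term) : Prop :=
  ∃ (C : Position) (s' : Term) (π : FinPerm) (θ : Subst),
    s = C.fill s' ∧ FreshSubst Δ R.ctx θ ∧
    Aeq Δ s' (permAct π (subst θ R.lhs)) ∧
    Aeq Δ (C.fill (permAct π (subst θ R.rhs))) t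

def OneStep (Rw : Set Rule) (Δ : Ctx) (s t : Term) : Prop := ∃ R ∈ Rw, OneStepR R Δ s t

/-- `Δ ⊢_R s ↔* t`: the reflexive-symmetric-transitive closure, including
α-equivalence, of one-step rewriting. -/
inductive RewEq (Rw : Set Rule) (Δ : Ctx) : Term → Term → Prop where
  | step {s t} : OneStep Rw Δ s t → RewEq Rw Δ s t
  | alpha {s t} : Aeq Δ s t → RewEq Rw Δ s t
  | symm {s t} : RewEq Rw Δ s t → RewEq Rw Δ t s
  | trans {s t u} : RewEq Rw Δ s t → RewEq Rw Δ t u → RewEq Rw Δ s u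

/-- Atoms of a judgement `(Δ, s, t)`. -/
noncomputable def judgeAtms (Δ : Ctx) (s t : Term) : Finset Atom := ctxAtoms Δ ∪ atmsF s ∪ atmsF t

def judgeUnkn (Δ : Ctx) (s t : Term) : Finset Unknown := ctxUnkns Δ ∪ unknF s ∪ unknF t

/-- `Γ` is a fresh context for a set of atoms `A`: its atoms avoid `A`. -/
def FreshFor (Γ : Ctx) (A : Finset Atom) : Prop := ∀ p ∈ Γ, p.1 ∉ A

/-- Nominal algebra equality `Δ ⊢_T s = t`. -/
inductive AlgEq (T : Set Rule) (Δ : Ctx) : Term → Term → Prop where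
  | axm {s t} (R : Rule) (hR : R ∈ T) (Γ : Ctx) (C : Position) (π : FinPerm) (θ : Subst) :
      FreshFor Γ (judgeAtms Δ s t) →
      FreshSubst (Δ ∪ Γ) R.ctx θ →
      Aeq (Δ ∪ Γ) s (C.fill (permAct π (subst θ R.lhs))) →
      Aeq (Δ ∪ Γ) (C.fill (permAct π (subst θ R.rhs))) t →
      AlgEq T Δ s t
  | refl (s) : AlgEq T Δ s s
  | symm {s t} : AlgEq T Δ s t → AlgEq T Δ t s
  | trans {s t u} : AlgEq T Δ s t → AlgEq T Δ t u → AlgEq T Δ s u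

/-- `Rw` is a presentation of the equational theory `T`. -/
def Presents (Rw : Set Rule) (T : Set Rule) : Prop :=
  ∀ R : Rule, R ∈ T ↔ (R ∈ Rw ∨ Rule.mk R.ctx R.rhs R.lhs ∈ Rw)

/-- Structural renaming of atoms (by a permutation `τ`) and unknowns (by `ρ`). -/
def renameT (τ : FinPerm) (ρ : Unknown → Unknown) : Term → Term
  | .atom a => .atom (τ a)
  | .var π X => .var (τ.comp (π.comp τ.inv)) (ρ X)
  | .abs a t => .abs (τ a) (renameT τ ρ t)
  | .app f ts => .app f (ts.attach.map fun t => renameT τ ρ t.1)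
decreasing_by
  all_goals simp_wf
  have := List.sizeOf_lt_of_mem t.2
  omega

def renameCtx (τ : FinPerm) (ρ : Unknown → Unknown) (Δ : Ctx) : Ctx :=
  Δ.image (fun p => (τ p.1, ρ p.2))

def Rule.rename (τ : FinPerm) (ρ : Unknown → Unknown) (R : Rule) : Rule :=
  ⟨renameCtx τ ρ R.ctx, renameT τ ρ R.lhs, renameT τ ρ R.rhs⟩

/-- `R'` is a freshened variant of `R`, avoiding also the atoms `A` and unknowns `U`. -/
def FreshenedVariant (A : Finset Atom) (U : Finset Unknown) (R R' : Rule) : Prop :=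
  ∃ (τ : FinPerm) (ρ : Equiv.Perm Unknown),
    R' = R.rename τ ρ ∧
    (∀ a ∈ R.atms, τ a ∉ A ∪ R.atms) ∧
    (∀ X ∈ R.unkn, (ρ X) ∉ U ∪ R.unkn)

/-- A rule (or axiom) `∇ ⊢ l → r` is closed: a freshened variant of `∇ ⊢ (l,r)` matches
`∇ ⊢ (l,r)` in the context `∇` extended with `atms(R') # unkn(R)`. -/
def Rule.Closed (R : Rule) : Prop :=
  ∃ R' : Rule, FreshenedVariant ∅ ∅ R R' ∧
    ∃ σ : Subst, (∀ X, X ∉ R'.unkn → σ X = .var FinPerm.id X) ∧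
      FreshSubst (R.ctx ∪ R'.atms ×ˢ R.unkn) R'.ctx σ ∧
      Aeq (R.ctx ∪ R'.atms ×ˢ R.unkn) (subst σ R'.lhs) R.lhs ∧
      Aeq (R.ctx ∪ R'.atms ×ˢ R.unkn) (subst σ R'.rhs) R.rhs

/-- One-step closed rewriting `Δ ⊢ s →c_R t`. -/
def ClosedStepR (R : Rule) (Δ : Ctx) (s t : Term) : Prop :=
  ∃ R' : Rule, FreshenedVariant (judgeAtms Δ s t ∪ R.atms) (judgeUnkn Δ s t ∪ R.unkn) R R' ∧
    ∃ (C : Position) (s' : Term) (θ : Subst),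
      s = C.fill s' ∧
      FreshSubst (Δ ∪ R'.atms ×ˢ judgeUnkn Δ s t) R'.ctx θ ∧
      Aeq (Δ ∪ R'.atms ×ˢ judgeUnkn Δ s t) s' (subst θ R'.lhs) ∧
      Aeq (Δ ∪ R'.atms ×ˢ judgeUnkn Δ s t) (C.fill (subst θ R'.rhs)) t

def ClosedStep (Rw : Set Rule) (Δ : Ctx) (s t : Term) : Prop := ∃ R ∈ Rw, ClosedStepR R Δ s t

/-- `Δ ⊢_R s ↔c* t`: reflexive-symmetric-transitive closure, including α-equivalence,
of one-step closed rewriting. -/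
inductive ClosedRewEq (Rw : Set Rule) (Δ : Ctx) : Term → Term → Prop where
  | step {s t} : ClosedStep Rw Δ s t → ClosedRewEq Rw Δ s t
  | alpha {s t} : Aeq Δ s t → ClosedRewEq Rw Δ s t
  | symm {s t} : ClosedRewEq Rw Δ s t → ClosedRewEq Rw Δ t s
  | trans {s t u} : ClosedRewEq Rw Δ s t → ClosedRewEq Rw Δ t u → ClosedRewEq Rw Δ s u


/-- Does the term have an unknown occurrence not under any abstraction? -/
def exposedB : Term → Bool
  | .atom _ => false
  | .var _ _ => true
  | .abs _ _ => false
  | .app _ ts => ts.attach.any fun t => exposedB t.1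
decreasing_by
  all_goals simp_wf
  have := List.sizeOf_lt_of_mem t.2
  omega

/-- Number of app-nodes above exposed unknown occurrences. -/
def mval : Term → ℕ
  | .atom _ => 0
  | .var _ _ => 0
  | .abs _ _ => 0
  | .app _ ts => (ts.attach.map fun t => mval t.1).sum
      + (if ts.attach.any (fun t => exposedB t.1) then 1 else 0)
decreasing_by
  all_goals simp_wf
  have := List.sizeOf_lt_of_mem t.2
  omega

theorem attach_any (ts : List Term) (f : Term → Bool) :
    (ts.attach.any fun t => f t.1) = ts.any f := by
  rw [Bool.eq_iff_iff]; simp [List.any_eq_true]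

theorem attach_map (ts : List Term) (f : Term → α) :
    (ts.attach.map fun t => f t.1) = ts.map f := List.attach_map_val

theorem exposedB_app (g : ℕ) (ts : List Term) : exposedB (.app g ts) = ts.any exposedB := by
  rw [exposedB, attach_any]

theorem mval_app (g : ℕ) (ts : List Term) :
    mval (.app g ts) = (ts.map mval).sum + (if ts.any exposedB then 1 else 0) := by
  rw [mval, attach_any, attach_map]

theorem permAct_app (π : FinPerm) (g : ℕ) (ts : List Term) :
    permAct π (.app g ts) = .app g (ts.map (permAct π)) := by
  rw [permAct, attach_map]

theorem subst_app (θ : Subst) (g : ℕ) (ts : List Term) :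
    subst θ (.app g ts) = .app g (ts.map (subst θ)) := by
  rw [subst, attach_map]

theorem fillAux_app (X : Unknown) (u : Term) (g : ℕ) (ts : List Term) :
    fillAux X u (.app g ts) = .app g (ts.map (fillAux X u)) := by
  rw [fillAux, attach_map]

theorem exposedB_perm (π : FinPerm) (t : Term) : exposedB (permAct π t) = exposedB t := by
  match t with
  | .atom a => simp [permAct, exposedB]
  | .var π' Y => simp [permAct, exposedB]
  | .abs a s => simp [permAct, exposedB]
  | .app g ts =>
    have IH : ∀ t ∈ ts, exposedB (permAct π t) = exposedB t := fun t ht => exposedB_perm π t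
    rw [permAct_app, exposedB_app, exposedB_app, Bool.eq_iff_iff]
    simp only [List.any_eq_true, List.mem_map]
    constructor
    · rintro ⟨_, ⟨t, ht, rfl⟩, h⟩; exact ⟨t, ht, (IH t ht) ▸ h⟩
    · rintro ⟨t, ht, h⟩; exact ⟨permAct π t, ⟨t, ht, rfl⟩, (IH t ht).trans h⟩
decreasing_by
  all_goals simp_wf
  have := List.sizeOf_lt_of_mem ht
  omega

theorem mval_perm (π : FinPerm) (t : Term) : mval (permAct π t) = mval t := by
  match t with
  | .atom a => simp [permAct, mval]
  | .var π' Y => simp [permAct, mval]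
  | .abs a s => simp [permAct, mval]
  | .app g ts =>
    have IH : ∀ t ∈ ts, mval (permAct π t) = mval t := fun t ht => mval_perm π t
    rw [permAct_app, mval_app, mval_app]
    have hc : (ts.map (permAct π)).any exposedB = ts.any exposedB := by
      rw [Bool.eq_iff_iff]
      simp only [List.any_eq_true, List.mem_map]
      constructor
      · rintro ⟨_, ⟨t, ht, rfl⟩, h⟩; exact ⟨t, ht, (exposedB_perm π t) ▸ h⟩
      · rintro ⟨t, ht, h⟩; exact ⟨permAct π t, ⟨t, ht, rfl⟩, (exposedB_perm π t).trans h⟩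
    rw [hc, List.map_map]
    congr 2
    exact List.map_congr_left fun t ht => IH t ht
decreasing_by
  all_goals simp_wf
  have := List.sizeOf_lt_of_mem ht
  omega
theorem fresh_empty_not_exposed {a : Atom} {t : Term} (h : Fresh ∅ a t) :
    exposedB t = false := by
  induction h with
  | atom _ => simp [exposedB]
  | var hmem => exact absurd hmem (by simp)
  | absSame => simp [exposedB]
  | absDiff _ _ _ => simp [exposedB]
  | app _ ih =>
    rw [exposedB_app, List.any_eq_false]
    intro t ht
    simp [ih t ht]

theorem zip_maps {ts us : List Term} (hlen : ts.length = us.length)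
    (h : ∀ p ∈ ts.zip us, exposedB p.1 = exposedB p.2 ∧ mval p.1 = mval p.2) :
    ts.any exposedB = us.any exposedB ∧ ts.map mval = us.map mval := by
  induction ts generalizing us with
  | nil => cases us with
    | nil => exact ⟨rfl, rfl⟩
    | cons u us => simp at hlen
  | cons t ts ihl =>
    cases us with
    | nil => simp at hlen
    | cons u us =>
      have h1 := h (t, u) (by simp)
      have h2 := ihl (by simpa using hlen) (fun p hp => h p (by simp [hp]))
      simp [h1.1, h1.2, h2.1, h2.2]

theorem aeq_invariant {Δ : Ctx} {s t : Term} (h : Aeq Δ s t) :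
    exposedB s = exposedB t ∧ mval s = mval t := by
  induction h with
  | atom => exact ⟨rfl, rfl⟩
  | var _ => exact ⟨by simp [exposedB], by simp [mval]⟩
  | absSame _ => exact ⟨by simp [exposedB], by simp [mval]⟩
  | absDiff _ _ _ => exact ⟨by simp [exposedB], by simp [mval]⟩
  | app hlen _ ih =>
    have key := zip_maps hlen ih
    rename_i ts us _
    constructor
    · rw [exposedB_app, exposedB_app, key.1]
    · rw [mval_app, mval_app, key.2, key.1]
theorem fill_invariant (X : Unknown) (u u' : Term) (he : exposedB u = exposedB u')
    (hm : mval u = mval u') (c : Term) :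
    exposedB (fillAux X u c) = exposedB (fillAux X u' c) ∧
      mval (fillAux X u c) = mval (fillAux X u' c) := by
  match c with
  | .atom a => simp [fillAux]
  | .var π Y =>
    rw [fillAux, fillAux]
    by_cases h : Y = X
    · simp only [h, if_pos rfl]; exact ⟨he, hm⟩
    · simp [if_neg h]
  | .abs a s => rw [fillAux, fillAux]; exact ⟨by simp [exposedB], by simp [mval]⟩
  | .app g ts =>
    have IH : ∀ t ∈ ts, exposedB (fillAux X u t) = exposedB (fillAux X u' t) ∧
        mval (fillAux X u t) = mval (fillAux X u' t) :=
      fun t ht => fill_invariant X u u' he hm t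
    rw [fillAux_app, fillAux_app]
    have key := zip_maps (ts := ts.map (fillAux X u)) (us := ts.map (fillAux X u'))
      (by simp) (by
        intro p hp
        rw [List.zip_map'] at hp
        simp only [List.mem_map] at hp
        obtain ⟨t, ht, rfl⟩ := hp
        exact IH t ht)
    constructor
    · rw [exposedB_app, exposedB_app, key.1]
    · rw [mval_app, mval_app, key.2, key.1]
decreasing_by
  all_goals simp_wf
  have := List.sizeOf_lt_of_mem ht
  omega
theorem rewEq_invariant {a : Atom} {X : Unknown} {f : ℕ} {s t : Term}
    (h : RewEq {Rule.mk {(a, X)} (.var FinPerm.id X) (.app f [.var FinPerm.id X])} ∅ s t) :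
    exposedB s = exposedB t ∧ mval s = mval t := by
  induction h with
  | alpha h => exact aeq_invariant h
  | symm _ ih => exact ⟨ih.1.symm, ih.2.symm⟩
  | trans _ _ ih1 ih2 => exact ⟨ih1.1.trans ih2.1, ih1.2.trans ih2.2⟩
  | step h =>
    obtain ⟨R, hR, C, s', π, θ, hs, hfr, h1, h2⟩ := h
    rw [Set.mem_singleton_iff] at hR
    subst hR
    set w : Term := subst θ (.var FinPerm.id X) with hw
    have hfresh : Fresh ∅ a w := hfr (a, X) (Finset.mem_singleton_self _)
    have hwE : exposedB w = false := fresh_empty_not_exposed hfresh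
    have hrhs : subst θ (Term.app f [.var FinPerm.id X]) = .app f [w] := by
      rw [subst_app, List.map_singleton]
    have hu' : permAct π (subst θ (Term.app f [.var FinPerm.id X]))
        = .app f [permAct π w] := by rw [hrhs, permAct_app, List.map_singleton]
    have heu : exposedB (permAct π w) = false := by rw [exposedB_perm]; exact hwE
    have he : exposedB (permAct π w)
        = exposedB (permAct π (subst θ (Term.app f [.var FinPerm.id X]))) := by
      rw [hu', exposedB_app]; simp [heu]
    have hm : mval (permAct π w)
        = mval (permAct π (subst θ (Term.app f [.var FinPerm.id X]))) := by
      rw [hu', mval_app]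
      simp [heu]
    have i1 := aeq_invariant h1
    have i2 := aeq_invariant h2
    have ifill := fill_invariant C.hole s'
      (permAct π (subst θ (Term.app f [.var FinPerm.id X])))
      (i1.1.trans he) (i1.2.trans hm) C.ctx
    rw [hs]
    exact ⟨(ifill.1.trans i2.1 : _), (ifill.2.trans i2.2 : _)⟩
theorem nontriv_id : FinPerm.id.nontriv = ∅ := by
  ext b
  simp [FinPerm.nontriv, FinPerm.id]

/-- Non-completeness without fresh atoms: with `T = {a#X ⊢ X = f(X)}` and
`R = {a#X ⊢ X → f(X)}`, we have `⊢_T X = f(X)` but not `⊢_R X ↔* f(X)`. -/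
theorem rew_not_complete :
    ∀ (a : Atom) (X : Unknown) (f : ℕ),
      AlgEq {Rule.mk {(a, X)} (.var FinPerm.id X) (.app f [.var FinPerm.id X])} ∅
        (.var FinPerm.id X) (.app f [.var FinPerm.id X]) ∧
      ¬ RewEq {Rule.mk {(a, X)} (.var FinPerm.id X) (.app f [.var FinPerm.id X])} ∅
        (.var FinPerm.id X) (.app f [.var FinPerm.id X]) := by
  intro a X f
  constructor
  · -- AlgEq part
    have honce : countUnk (X + 1) (Term.var FinPerm.id (X + 1)) = 1 := by
      simp [countUnk]
    have hidOnly : ∀ π : FinPerm, Subterm (.var π (X + 1)) (.var FinPerm.id (X + 1)) →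
        π = FinPerm.id := by
      intro π h
      cases h
      rfl
    refine AlgEq.axm (Rule.mk {(a, X)} (.var FinPerm.id X) (.app f [.var FinPerm.id X]))
      (Set.mem_singleton _) {(a, X)} ⟨.var FinPerm.id (X + 1), X + 1, honce, hidOnly⟩
      FinPerm.id (fun Y => .var FinPerm.id Y) ?_ ?_ ?_ ?_
    · -- FreshFor
      intro p hp
      simp [judgeAtms, ctxAtoms, atmsF, atmsLF, nontriv_id]
    · -- FreshSubst
      intro p hp
      rw [Finset.mem_singleton] at hp
      subst hp
      show Fresh _ a (subst _ (.var FinPerm.id X))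
      erw [subst.eq_2, permAct]
      apply Fresh.var
      have : ((FinPerm.id.comp FinPerm.id).inv : Atom → Atom) a = a := rfl
      rw [this]
      simp
    · -- lhs side
      simp only [Position.fill, subst, permAct, fillAux]
      simp only [if_true]
      erw [subst.eq_2]
      simp only [permAct]
      apply Aeq.var
      intro b hb
      exact absurd rfl hb
    · -- rhs side
      simp only [Position.fill, subst_app, List.map_singleton, subst, permAct_app, permAct,
        fillAux]
      simp only [if_true]
      erw [subst_app]
      simp only [List.map_singleton]
      erw [subst.eq_2]
      simp only [permAct_app, List.map_singleton, permAct]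
      apply Aeq.app rfl
      intro p hp
      simp only [List.zip_cons_cons, List.zip_nil_right, List.mem_singleton] at hp
      subst hp
      apply Aeq.var
      intro b hb
      exact absurd rfl hb
  · -- negation part
    intro h
    have hinv := rewEq_invariant h
    have h1 : mval (Term.var FinPerm.id X) = 0 := by simp [mval]
    have h2 : mval (Term.app f [Term.var FinPerm.id X]) = 1 := by
      rw [mval_app]
      simp [mval, exposedB]
    rw [h1, h2] at hinv
    exact absurd hinv.2 (by omega)
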